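/- For every rational x in [0,1], the value ‽(x) of the interrobang function is a dyadic rational number, i.e., a rational whose denominator in lowest terms is a power of 2. -/

import Mathlib

/-- The defining functional equations of the interrobang function on `[0,1] ∩ ℚ`. -/
def InterrobangEq (f : ℚ → ℝ) : Prop :=
  f 0 = 0 ∧
  (∀ x : ℚ, 0 < x → x ≤ 1/2 →
    f x = (4 : ℝ) ^ (-⌊(1/x : ℚ)⌋) * (1 - 2 * f (Int.fract (1/x)))) ∧
  (∀ x : ℚ, 1/2 < x → x ≤ 1 →
    f x = 3/8 - 3/4 * f (1/x - 1) - 1/2 * f (1 - x))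

/-- `q` is dyadic: its denominator divides a power of 2. -/
def Dy (q : ℚ) : Prop := ∃ k : ℕ, q.den ∣ 2 ^ k

lemma Dy.add {a b : ℚ} (ha : Dy a) (hb : Dy b) : Dy (a + b) := by
  obtain ⟨j, hj⟩ := ha; obtain ⟨k, hk⟩ := hb
  exact ⟨j + k, (Rat.add_den_dvd a b).trans (by rw [pow_add]; exact mul_dvd_mul hj hk)⟩

lemma Dy.mul {a b : ℚ} (ha : Dy a) (hb : Dy b) : Dy (a * b) := by
  obtain ⟨j, hj⟩ := ha; obtain ⟨k, hk⟩ := hb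
  exact ⟨j + k, (Rat.mul_den_dvd a b).trans (by rw [pow_add]; exact mul_dvd_mul hj hk)⟩

lemma Dy.neg {a : ℚ} (ha : Dy a) : Dy (-a) := by
  obtain ⟨j, hj⟩ := ha; exact ⟨j, by rwa [Rat.neg_den]⟩

lemma Dy.sub {a b : ℚ} (ha : Dy a) (hb : Dy b) : Dy (a - b) := by
  rw [sub_eq_add_neg]; exact ha.add hb.neg

lemma dy_inv_two_pow (n : ℕ) : Dy (((2 : ℚ) ^ n)⁻¹) := by
  refine ⟨n, ?_⟩
  have : ((2 : ℚ) ^ n)⁻¹ = (((2 ^ n : ℕ) : ℚ))⁻¹ := by push_cast; ring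
  rw [this, Rat.inv_natCast_den_of_pos (by positivity)]

lemma dy_ofScientific (a : ℤ) (n : ℕ) : Dy ((a : ℚ) / 2 ^ n) := by
  have : (a : ℚ) / 2 ^ n = (a : ℚ) * ((2 : ℚ) ^ n)⁻¹ := by ring
  rw [this]
  exact Dy.mul ⟨0, by simp⟩ (dy_inv_two_pow n)

/-- The denominator of `x⁻¹` divides `x.num.natAbs`. -/
lemma den_inv_dvd (x : ℚ) : (x⁻¹).den ∣ x.num.natAbs := by
  have h := Rat.den_dvd (x.den : ℤ) x.num
  rw [← Rat.inv_def] at h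
  exact Int.natCast_dvd.mp h

theorem interrobang_rational_to_dyadic (f : ℚ → ℝ) (hf : InterrobangEq f) :
    ∀ x : ℚ, 0 ≤ x → x ≤ 1 → ∃ q : ℚ, f x = (q : ℝ) ∧ ∃ k : ℕ, q.den = 2^k := by
  obtain ⟨h0, h1, h2⟩ := hf
  suffices H : ∀ n : ℕ, ∀ x : ℚ, 0 ≤ x → x ≤ 1 →
      2 * x.den + (if 1/2 < x then 1 else 0) ≤ n → ∃ q : ℚ, f x = (q : ℝ) ∧ Dy q by
    intro x hx0 hx1
    obtain ⟨q, hq, k, hk⟩ := H (2 * x.den + 1) x hx0 hx1 (by split <;> omega)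
    obtain ⟨j, _, hj⟩ := (Nat.dvd_prime_pow Nat.prime_two).mp hk
    exact ⟨q, hq, j, hj⟩
  intro n
  induction n using Nat.strong_induction_on with
  | _ n IH =>
  intro x hx0 hx1 hm
  set M : ℚ → ℕ := fun y => 2 * y.den + (if 1/2 < y then 1 else 0) with hM
  rcases eq_or_lt_of_le hx0 with rfl | hx0
  · exact ⟨0, by simpa using h0, ⟨0, by simp⟩⟩
  have hxnum : 0 < x.num := Rat.num_pos.mpr hx0
  have hden : 0 < x.den := x.pos
  -- key: the argument used in recursive calls has small measure
  have key : ∀ y : ℚ, 0 ≤ y → y ≤ 1 → M y < M x → ∃ q : ℚ, f y = (q : ℝ) ∧ Dy q := by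
    intro y hy0 hy1 hlt
    exact IH (M y) (lt_of_lt_of_le hlt hm) y hy0 hy1 le_rfl
  rcases le_or_gt x (1/2) with hhalf | hhalf
  · -- case 0 < x ≤ 1/2
    have hx1' : x < 1 := lt_of_le_of_lt hhalf (by norm_num)
    have hnumden : x.num < x.den := Rat.num_lt_denom_iff.mpr hx1'
    set y : ℚ := Int.fract (1/x) with hy
    have hy0 : 0 ≤ y := Int.fract_nonneg _
    have hy1 : y < 1 := Int.fract_lt_one _
    have hyden : y.den ∣ x.num.natAbs := by
      have h1d : (x⁻¹).den ∣ x.num.natAbs := den_inv_dvd x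
      have : y = x⁻¹ + (-(⌊(1/x : ℚ)⌋ : ℤ) : ℚ) := by
        simp [hy, Int.fract, one_div, sub_eq_add_neg]
      rw [this]
      exact ((Rat.add_den_dvd _ _).trans (by simp)).trans h1d
    have hMy : M y < M x := by
      have h1 : y.den ≤ x.num.natAbs := Nat.le_of_dvd (Int.natAbs_pos.mpr hxnum.ne') hyden
      have h2 : x.num.natAbs < x.den := by omega
      have h3 : ¬ (1/2 < x) := not_lt.mpr hhalf
      simp only [hM, h3, if_neg, if_true]
      split <;> omega
    obtain ⟨q', hq', hdq'⟩ := key y hy0 hy1.le hMy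
    -- the floor is nonnegative
    have hfl : 0 ≤ ⌊(1/x : ℚ)⌋ := Int.floor_nonneg.mpr (by positivity)
    obtain ⟨m, hmm⟩ : ∃ m : ℕ, ⌊(1/x : ℚ)⌋ = (m : ℤ) := ⟨_, (Int.toNat_of_nonneg hfl).symm⟩
    refine ⟨(4 : ℚ) ^ (-⌊(1/x : ℚ)⌋) * (1 - 2 * q'), ?_, ?_⟩
    · rw [h1 x hx0 hhalf, ← hy, hq']
      push_cast [Rat.cast_zpow]
      ring
    · have h4 : (4 : ℚ) ^ (-⌊(1/x : ℚ)⌋) = ((2 : ℚ) ^ (2 * m))⁻¹ := by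
        rw [hmm, zpow_neg, zpow_natCast]
        norm_num [pow_mul]
      rw [h4]
      refine Dy.mul (dy_inv_two_pow _) (Dy.sub ⟨0, by simp⟩ (Dy.mul ⟨0, by simp⟩ hdq'))
  · -- case 1/2 < x ≤ 1
    rcases eq_or_lt_of_le hx1 with rfl | hx1'
    · refine ⟨3/8, ?_, ⟨3, by norm_num⟩⟩
      rw [h2 1 (by norm_num) le_rfl]
      norm_num [h0]
    · have hnumden : x.num < x.den := Rat.num_lt_denom_iff.mpr hx1'
      set y₁ : ℚ := 1/x - 1 with hy₁
      set y₂ : ℚ := 1 - x with hy₂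
      have hy₁0 : 0 ≤ y₁ := by
        rw [hy₁, sub_nonneg, le_div_iff₀ hx0, one_mul]; exact hx1
      have hy₁1 : y₁ ≤ 1 := by
        rw [hy₁, sub_le_iff_le_add]
        rw [div_le_iff₀ hx0]
        linarith
      have hy₂0 : 0 ≤ y₂ := by rw [hy₂]; linarith
      have hy₂half : y₂ < 1/2 := by rw [hy₂]; linarith
      have hMy₁ : M y₁ < M x := by
        have hd : y₁.den ∣ x.num.natAbs := by
          have : y₁ = x⁻¹ + (-1 : ℤ) := by rw [hy₁]; push_cast; ring
          rw [this]
          exact ((Rat.add_den_dvd _ _).trans (by simp)).trans (den_inv_dvd x)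
        have h1 : y₁.den ≤ x.num.natAbs := Nat.le_of_dvd (Int.natAbs_pos.mpr hxnum.ne') hd
        have h2 : x.num.natAbs < x.den := by omega
        have h3 : (1/2 : ℚ) < x := hhalf
        simp only [hM, h3, if_true]
        split <;> omega
      have hMy₂ : M y₂ < M x := by
        have hd : y₂.den ∣ x.den := by
          have : y₂ = ((1 : ℤ) : ℚ) + (-x) := by rw [hy₂]; push_cast; ring
          rw [this]
          exact (Rat.add_den_dvd _ _).trans (by simp [Rat.neg_den])
        have h1 : y₂.den ≤ x.den := Nat.le_of_dvd hden hd
        have h3 : (1/2 : ℚ) < x := hhalf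
        have h4 : ¬ (1/2 < y₂) := not_lt.mpr hy₂half.le
        simp only [hM, h3, h4, if_true, if_neg, if_false]
        omega
      obtain ⟨q₁, hq₁, hdq₁⟩ := key y₁ hy₁0 hy₁1 hMy₁
      obtain ⟨q₂, hq₂, hdq₂⟩ := key y₂ hy₂0 (by linarith) hMy₂
      refine ⟨3/8 - 3/4 * q₁ - 1/2 * q₂, ?_, ?_⟩
      · rw [h2 x hhalf hx1, ← hy₁, ← hy₂, hq₁, hq₂]
        push_cast
        ring
      · have d38 : Dy (3/8 : ℚ) := by
          have := dy_ofScientific 3 3; norm_num at this ⊢; exact this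
        have d34 : Dy (3/4 : ℚ) := by
          have := dy_ofScientific 3 2; norm_num at this ⊢; exact this
        have d12 : Dy (1/2 : ℚ) := by
          have := dy_ofScientific 1 1; norm_num at this ⊢; exact this
        exact (d38.sub (d34.mul hdq₁)).sub (d12.mul hdq₂)
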